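/- Let 𝓕 be a filterdual such that h(𝓕) is closed under the addition of ultrafilters, and let π : (X,T) → (Y,S) be a factor map between dynamical systems. If y ∈ Y is an 𝓕-recurrent point, then there exists an 𝓕-recurrent point x ∈ X with π(x) = y. -/

import Mathlib

open Finset

/-- An ultrafilter `p` on `ℕ₊` is idempotent: `p + p = p`, where
`A ∈ p + q ↔ {n | {m | n + m ∈ A} ∈ q} ∈ p`. -/
def IsIdempotentUF (p : Ultrafilter ℕ+) : Prop :=
  ∀ A : Set ℕ+, ({n : ℕ+ | {m : ℕ+ | n + m ∈ A} ∈ p} ∈ p ↔ A ∈ p)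

/-- A (Furstenberg) family on `ℕ₊`: a collection of subsets closed under supersets. -/
def IsFamily (F : Set (Set ℕ+)) : Prop :=
  ∀ ⦃A B : Set ℕ+⦄, A ⊆ B → A ∈ F → B ∈ F

/-- A filterdual: a nonempty proper family with the Ramsey property. -/
def IsFilterdual (F : Set (Set ℕ+)) : Prop :=
  IsFamily F ∧ F.Nonempty ∧ F ≠ Set.univ ∧
    ∀ A B : Set ℕ+, A ∪ B ∈ F → A ∈ F ∨ B ∈ F

/-- `p ∈ h(F)`: every member of the ultrafilter `p` belongs to the family `F`. -/
def InHull (F : Set (Set ℕ+)) (p : Ultrafilter ℕ+) : Prop :=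
  ∀ A ∈ p, A ∈ F

/-- `h(F)` is closed under the addition of ultrafilters: whenever `p, q ∈ h(F)`,
every member of `p + q` belongs to `F` (where `A ∈ p + q ↔ {n | {m | n+m ∈ A} ∈ q} ∈ p`). -/
def HullAddClosed (F : Set (Set ℕ+)) : Prop :=
  ∀ p q : Ultrafilter ℕ+, InHull F p → InHull F q →
    ∀ A : Set ℕ+, {n : ℕ+ | {m : ℕ+ | n + m ∈ A} ∈ q} ∈ p → A ∈ F

/-- `A` is an essential `F`-set: some idempotent ultrafilter `p ∈ h(F)` has `A ∈ p`. -/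
def IsEssentialSet (F : Set (Set ℕ+)) (A : Set ℕ+) : Prop :=
  ∃ p : Ultrafilter ℕ+, IsIdempotentUF p ∧ InHull F p ∧ A ∈ p

/-- `x` is an `F`-recurrent point of the system `(X, T)`:
`N(x, U) = {n ∈ ℕ₊ | T^n x ∈ U} ∈ F` for every open neighborhood `U` of `x`. -/
def FRecurrent (F : Set (Set ℕ+)) {X : Type*} [TopologicalSpace X] (T : X → X) (x : X) : Prop :=
  ∀ U : Set X, IsOpen U → x ∈ U → {n : ℕ+ | T^[(n : ℕ)] x ∈ U} ∈ F

open Filter Topology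

lemma my_empty_not_mem {F : Set (Set ℕ+)} (hfd : IsFilterdual F) : ∅ ∉ F := by
  intro h
  apply hfd.2.2.1
  ext A
  simp only [Set.mem_univ, iff_true]
  exact hfd.1 (Set.empty_subset A) h

lemma my_ramsey {F : Set (Set ℕ+)} (hfd : IsFilterdual F) {ι : Type*} {s : Set ι}
    (hs : s.Finite) (A : ι → Set ℕ+) (h : (⋃ i ∈ s, A i) ∈ F) : ∃ i ∈ s, A i ∈ F := by
  refine Set.Finite.induction_on
    (motive := fun s _ => (⋃ i ∈ s, A i) ∈ F → ∃ i ∈ s, A i ∈ F) s hs ?_ ?_ h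
  · intro h0
    simp only [Set.mem_empty_iff_false, Set.iUnion_of_empty, Set.iUnion_empty] at h0
    exact absurd h0 (my_empty_not_mem hfd)
  · intro a t hat htfin ih h0
    rw [Set.biUnion_insert] at h0
    rcases hfd.2.2.2 _ _ h0 with h1 | h2
    · exact ⟨a, Set.mem_insert _ _, h1⟩
    · obtain ⟨i, hi, hAi⟩ := ih h2
      exact ⟨i, Set.mem_insert_of_mem _ hi, hAi⟩

lemma my_exists_uf {F : Set (Set ℕ+)} (hfd : IsFilterdual F) (G : Filter ℕ+)
    (hG : ∀ A ∈ G, A ∈ F) :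
    ∃ p : Ultrafilter ℕ+, ↑p ≤ G ∧ ∀ A ∈ p, A ∈ F := by
  classical
  set H := G ⊓ ⨅ A : {A : Set ℕ+ // A ∉ F}, Filter.principal (↑A)ᶜ with hH
  have hne : H.NeBot := by
    rw [Filter.neBot_iff]
    intro hbot
    have h0 : (∅ : Set ℕ+) ∈ H := by rw [hbot]; exact Filter.mem_bot
    obtain ⟨B, hB, Cs, hCs, hBC⟩ := Filter.mem_inf_iff.mp h0
    obtain ⟨I, hIfin, V, hV, rfl⟩ := Filter.mem_iInf.mp hCs
    have hsub : B ⊆ ⋃ i ∈ I, (i : Set ℕ+) := by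
      intro x hx
      have hxC : x ∉ ⋂ i : I, V i := by
        intro hxC
        have : x ∈ (∅ : Set ℕ+) := by rw [hBC]; exact ⟨hx, hxC⟩
        exact this
      rw [Set.mem_iInter] at hxC
      push_neg at hxC
      obtain ⟨i, hi⟩ := hxC
      have hVi := hV i
      rw [Filter.mem_principal] at hVi
      have : x ∈ (i : {A : Set ℕ+ // A ∉ F}).1 := by
        by_contra hxi
        exact hi (hVi hxi)
      exact Set.mem_biUnion i.2 this
    have hU : (⋃ i ∈ I, ((i : {A : Set ℕ+ // A ∉ F}) : Set ℕ+)) ∈ F :=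
      hfd.1 hsub (hG B hB)
    obtain ⟨i, hiI, hiF⟩ := my_ramsey hfd hIfin _ hU
    exact i.2 hiF
  obtain ⟨p, hp⟩ := Ultrafilter.exists_le H
  refine ⟨p, hp.trans inf_le_left, fun A hA => ?_⟩
  by_contra hAF
  have : (↑A : Set ℕ+)ᶜ ∈ p := by
    have h1 : H ≤ Filter.principal Aᶜ :=
      inf_le_right.trans (iInf_le (fun A : {A : Set ℕ+ // A ∉ F} => Filter.principal (A.1)ᶜ) ⟨A, hAF⟩)
    exact (hp.trans h1) (Filter.mem_principal_self _)
  exact (Ultrafilter.compl_mem_iff_notMem.mp this) hA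

attribute [local instance] Ultrafilter.add Ultrafilter.addSemigroup

/-- For a filterdual `F` whose hull is closed under addition of ultrafilters, and a
factor map `π : (X, T) → (Y, S)`: every `F`-recurrent point `y ∈ Y` lifts to an
`F`-recurrent point `x ∈ π⁻¹(y)`. -/
theorem frecurrent_lifts (F : Set (Set ℕ+))
    (hfd : IsFilterdual F) (hadd : HullAddClosed F)
    {X Y : Type*} [TopologicalSpace X] [CompactSpace X] [T2Space X] [Nonempty X]
    [TopologicalSpace Y] [CompactSpace Y] [T2Space Y] [Nonempty Y]
    (T : X → X) (S : Y → Y) (hT : Continuous T) (hS : Continuous S)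
    (π : X → Y) (hπc : Continuous π) (hπs : Function.Surjective π)
    (hfac : ∀ z : X, π (T z) = S (π z))
    (y : Y) (hy : FRecurrent F S y) :
    ∃ x : X, π x = y ∧ FRecurrent F T x := by
  classical
  set g : ℕ+ → Y := fun n => S^[(n : ℕ)] y with hg
  set G : Filter ℕ+ := Filter.comap g (𝓝 y) with hGdef
  -- every member of G belongs to F
  have hGF : ∀ A ∈ G, A ∈ F := by
    intro A hA
    obtain ⟨V, hV, hVA⟩ := hA
    obtain ⟨U, hUV, hUopen, hyU⟩ := mem_nhds_iff.mp hV
    have h1 : {n : ℕ+ | S^[(n : ℕ)] y ∈ U} ∈ F := hy U hUopen hyU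
    refine hfd.1 ?_ h1
    intro n hn
    exact hVA (hUV hn)
  -- the candidate set of ultrafilters
  set C : Set (Ultrafilter ℕ+) := {p | InHull F p ∧ ↑p ≤ G} with hCdef
  have hCne : C.Nonempty := by
    obtain ⟨p, hp1, hp2⟩ := my_exists_uf hfd G hGF
    exact ⟨p, hp2, hp1⟩
  have hCclosed : IsClosed C := by
    have : C = (⋂ A ∈ {A : Set ℕ+ | A ∉ F}, {p : Ultrafilter ℕ+ | Aᶜ ∈ p}) ∩
        ⋂ A ∈ {A : Set ℕ+ | A ∈ G}, {p : Ultrafilter ℕ+ | A ∈ p} := by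
      ext p
      simp only [hCdef, Set.mem_inter_iff, Set.mem_iInter, Set.mem_setOf_eq]
      constructor
      · rintro ⟨h1, h2⟩
        refine ⟨fun A hA => ?_, fun A hA => h2 hA⟩
        rw [Ultrafilter.compl_mem_iff_notMem]
        intro hAp
        exact hA (h1 A hAp)
      · rintro ⟨h1, h2⟩
        refine ⟨fun A hAp => ?_, fun A hA => h2 A hA⟩
        by_contra hAF
        exact (Ultrafilter.compl_mem_iff_notMem.mp (h1 A hAF)) hAp
    rw [this]
    exact IsClosed.inter
      (isClosed_biInter fun A _ => ultrafilter_isClosed_basic _)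
      (isClosed_biInter fun A _ => ultrafilter_isClosed_basic _)
  have hCcompact : IsCompact C := hCclosed.isCompact
  -- C is a subsemigroup
  have hCadd : ∀ p ∈ C, ∀ q ∈ C, p + q ∈ C := by
    rintro p ⟨hp1, hp2⟩ q ⟨hq1, hq2⟩
    constructor
    · intro A hA
      have h1 := (Ultrafilter.eventually_add p q (· ∈ A)).mp hA
      exact hadd p q hp1 hq1 A h1
    · intro A hA
      obtain ⟨V, hV, hVA⟩ := hA
      obtain ⟨U, hUV, hUopen, hyU⟩ := mem_nhds_iff.mp hV
      have hsub : g ⁻¹' U ⊆ A := fun n hn => hVA (hUV hn)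
      refine Filter.mem_of_superset ?_ hsub
      show g ⁻¹' U ∈ p + q
      rw [show (g ⁻¹' U ∈ p + q) ↔ _ from Ultrafilter.eventually_add p q (· ∈ g ⁻¹' U)]
      have hpre : g ⁻¹' U ∈ p := hp2 (Filter.preimage_mem_comap (hUopen.mem_nhds hyU))
      refine Filter.mem_of_superset hpre ?_
      intro n hn
      have hopen : IsOpen (S^[(n : ℕ)] ⁻¹' U) := (hS.iterate (n : ℕ)).isOpen_preimage U hUopen
      have hmem : y ∈ S^[(n : ℕ)] ⁻¹' U := hn
      have hq : g ⁻¹' (S^[(n : ℕ)] ⁻¹' U) ∈ q :=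
        hq2 (Filter.preimage_mem_comap (hopen.mem_nhds hmem))
      refine Filter.mem_of_superset hq ?_
      intro m hm
      show g (n + m) ∈ U
      have : g (n + m) = S^[(n : ℕ)] (g m) := by
        simp only [hg, PNat.add_coe, Function.iterate_add_apply]
      rw [this]
      exact hm
  -- Ellis: get an idempotent in C
  obtain ⟨p, hpC, hpidem⟩ := exists_idempotent_in_compact_add_subsemigroup
    Ultrafilter.continuous_add_left C hCne hCcompact hCadd
  obtain ⟨hpHull, hpG⟩ := hpC
  -- lift the point
  obtain ⟨x₀, hx₀⟩ := hπs y
  set f : ℕ+ → X := fun n => T^[(n : ℕ)] x₀ with hf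
  obtain ⟨x, -, hx⟩ := isCompact_univ.ultrafilter_le_nhds (p.map f)
    (by simp [le_principal_iff])
  have hftend : Filter.Tendsto f ↑p (𝓝 x) := by
    rwa [Ultrafilter.coe_map] at hx
  -- commutation
  have hcomm : ∀ (k : ℕ) (z : X), π (T^[k] z) = S^[k] (π z) := by
    intro k
    induction k with
    | zero => intro z; simp
    | succ k ih =>
      intro z
      rw [Function.iterate_succ_apply, Function.iterate_succ_apply, ih, hfac]
  have hπf : π ∘ f = g := by
    funext n
    simp only [Function.comp_apply, hf, hg, hcomm, hx₀]
  have hgtend : Filter.Tendsto g ↑p (𝓝 y) := by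
    rw [Filter.tendsto_iff_comap]
    exact hpG
  have hπx : π x = y := by
    have h1 : Filter.Tendsto (π ∘ f) ↑p (𝓝 (π x)) := (hπc.tendsto x).comp hftend
    rw [hπf] at h1
    exact tendsto_nhds_unique h1 hgtend
  refine ⟨x, hπx, ?_⟩
  intro U hUopen hxU
  -- enough to show {n | T^[n] x ∈ U} ∈ p
  have key : {n : ℕ+ | T^[(n : ℕ)] x ∈ U} ∈ p := by
    obtain ⟨K, hKnhds, hKclosed, hKU⟩ := exists_mem_nhds_isClosed_subset (hUopen.mem_nhds hxU)
    have hB : f ⁻¹' K ∈ p := hftend hKnhds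
    rw [← hpidem] at hB
    have h1 := (Ultrafilter.eventually_add p p (· ∈ f ⁻¹' K)).mp hB
    refine Filter.mem_of_superset h1 ?_
    intro n hn
    show T^[(n : ℕ)] x ∈ U
    have htend2 : Filter.Tendsto (fun m => f (n + m)) ↑p (𝓝 (T^[(n : ℕ)] x)) := by
      have h2 : Filter.Tendsto (fun m => T^[(n : ℕ)] (f m)) ↑p (𝓝 (T^[(n : ℕ)] x)) :=
        ((hT.iterate (n : ℕ)).tendsto x).comp hftend
      refine h2.congr fun m => ?_
      simp only [hf, PNat.add_coe, Function.iterate_add_apply]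
    have hKmem : T^[(n : ℕ)] x ∈ K :=
      hKclosed.mem_of_tendsto htend2 hn
    exact hKU hKmem
  exact hpHull _ key
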